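/- Let U, Z be random variables, each taking finitely many values on a common finite probability space, and let E be an event with Pr[E] = p > 0. Then I(U;Z) ≥ p·I_{|E}(U;Z) − p·log₂(4/p), where I_{|E}(U;Z) denotes the mutual information of U and Z computed under the conditional probability measure given E. -/

import Mathlib

open scoped Classical
open Finset

/-- Probability of an event `E` under a weight function `p` on a finite sample space. -/
noncomputable def prEv {Ω : Type*} [Fintype Ω] (p : Ω → ℝ) (E : Ω → Prop) : ℝ :=
  ∑ ω, if E ω then p ω else 0

/-- Shannon entropy (base 2) of a random variable `X` on a finite probability space,
with the convention `0 · log₂ 0 = 0` (automatic since `Real.logb 2 0 = 0`). -/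
noncomputable def ent {Ω S : Type*} [Fintype Ω] [Fintype S] (p : Ω → ℝ) (X : Ω → S) : ℝ :=
  -∑ s : S, prEv p (fun ω => X ω = s) * Real.logb 2 (prEv p (fun ω => X ω = s))

/-- Conditional Shannon entropy `H(X|Y)` (base 2). -/
noncomputable def condEnt {Ω S T : Type*} [Fintype Ω] [Fintype S] [Fintype T]
    (p : Ω → ℝ) (X : Ω → S) (Y : Ω → T) : ℝ :=
  -∑ s : S, ∑ t : T, prEv p (fun ω => X ω = s ∧ Y ω = t) *
      Real.logb 2 (prEv p (fun ω => X ω = s ∧ Y ω = t) / prEv p (fun ω => Y ω = t))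

/-- Mutual information `I(X;Y) = H(X) - H(X|Y)`. -/
noncomputable def mi {Ω S T : Type*} [Fintype Ω] [Fintype S] [Fintype T]
    (p : Ω → ℝ) (X : Ω → S) (Y : Ω → T) : ℝ :=
  ent p X - condEnt p X Y

/-- Conditional mutual information `I(X;Y|Z) = H(X|Z) - H(X|(Y,Z))`. -/
noncomputable def cmi {Ω S T U : Type*} [Fintype Ω] [Fintype S] [Fintype T] [Fintype U]
    (p : Ω → ℝ) (X : Ω → S) (Y : Ω → T) (Z : Ω → U) : ℝ :=
  condEnt p X Z - condEnt p X (fun ω => (Y ω, Z ω))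


/-- `x * ln(x/y) ≥ x - y` under suitable nonnegativity. -/
lemma mul_log_div_ge_aux (x y : ℝ) (hx : 0 ≤ x) (hy : 0 ≤ y) (h : x ≠ 0 → 0 < y) :
    x - y ≤ x * Real.log (x / y) := by
  rcases eq_or_lt_of_le hx with h0 | h0
  · rw [← h0, zero_mul]; linarith
  · have hy0 := h h0.ne'
    have hl : Real.log (y / x) ≤ y / x - 1 := Real.log_le_sub_one_of_pos (by positivity)
    have hinv : Real.log (x / y) = - Real.log (y / x) := by
      rw [← Real.log_inv]; congr 1; field_simp
    have hx' : x * (y / x - 1) = y - x := by field_simp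
    have hmul : x * Real.log (y / x) ≤ x * (y / x - 1) :=
      mul_le_mul_of_nonneg_left hl h0.le
    rw [hinv, mul_neg]
    linarith

/-- Log-sum (Gibbs) inequality over a finite type, base 2. -/
lemma gibbs {ι : Type*} [Fintype ι] (x y : ι → ℝ) (hx : ∀ i, 0 ≤ x i) (hy : ∀ i, 0 ≤ y i)
    (h : ∀ i, x i ≠ 0 → y i ≠ 0) :
    (∑ i, x i) * Real.logb 2 ((∑ i, x i) / (∑ i, y i)) ≤
      ∑ i, x i * Real.logb 2 (x i / y i) := by
  have hlog2 : (0:ℝ) < Real.log 2 := Real.log_pos one_lt_two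
  by_cases hX : ∑ i, x i = 0
  · have hx0 : ∀ i ∈ Finset.univ, x i = 0 :=
      (Finset.sum_eq_zero_iff_of_nonneg (fun i _ => hx i)).1 hX
    rw [hX, zero_mul]
    refine le_of_eq ?_
    symm
    exact Finset.sum_eq_zero fun i hi => by rw [hx0 i hi, zero_mul]
  · have hXpos : 0 < ∑ i, x i := (Finset.sum_nonneg fun i _ => hx i).lt_of_ne (Ne.symm hX)
    obtain ⟨j, hj⟩ : ∃ j, x j ≠ 0 := by
      by_contra hc; push_neg at hc; exact hX (Finset.sum_eq_zero fun i _ => hc i)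
    have hYpos : 0 < ∑ i, y i := by
      have hyj : 0 < y j := (hy j).lt_of_ne (Ne.symm (h j hj))
      calc (0:ℝ) < y j := hyj
        _ ≤ ∑ i, y i := Finset.single_le_sum (fun i _ => hy i) (Finset.mem_univ j)
    set X := ∑ i, x i with hXdef
    set Y := ∑ i, y i with hYdef
    have hcpos : 0 < X / Y := div_pos hXpos hYpos
    -- Step A : ∑ x i * log (x i / (y i * (X/Y))) ≥ 0  (natural log)
    have hA : 0 ≤ ∑ i, x i * Real.log (x i / (y i * (X / Y))) := by
      have hle : ∑ i, (x i - y i * (X / Y)) ≤ ∑ i, x i * Real.log (x i / (y i * (X / Y))) := by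
        refine Finset.sum_le_sum fun i _ => ?_
        refine mul_log_div_ge_aux _ _ (hx i) (mul_nonneg (hy i) hcpos.le) fun h0 => ?_
        have hyi : 0 < y i := (hy i).lt_of_ne (Ne.symm (h i h0))
        positivity
      have hzero : ∑ i, (x i - y i * (X / Y)) = 0 := by
        rw [Finset.sum_sub_distrib, ← Finset.sum_mul, ← hXdef, ← hYdef]
        field_simp
        ring
      linarith
    -- per-term identity in natural log
    have hterm : ∀ i, x i * Real.log (x i / y i) =
        x i * Real.log (x i / (y i * (X / Y))) + x i * Real.log (X / Y) := by
      intro i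
      rcases eq_or_ne (x i) 0 with h0 | h0
      · rw [h0]; ring
      · have hxi : 0 < x i := (hx i).lt_of_ne (Ne.symm h0)
        have hyi : 0 < y i := (hy i).lt_of_ne (Ne.symm (h i h0))
        have heq : x i / (y i * (X / Y)) = (x i / y i) / (X / Y) := by
          field_simp
        have h2 : Real.log (x i / (y i * (X / Y))) =
            Real.log (x i / y i) - Real.log (X / Y) := by
          rw [heq, Real.log_div (by positivity) hcpos.ne']
        rw [h2]; ring
    have hsum : ∑ i, x i * Real.log (x i / y i) =
        (∑ i, x i * Real.log (x i / (y i * (X / Y)))) + X * Real.log (X / Y) := by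
      calc ∑ i, x i * Real.log (x i / y i)
          = ∑ i, (x i * Real.log (x i / (y i * (X / Y))) + x i * Real.log (X / Y)) :=
            Finset.sum_congr rfl fun i _ => hterm i
        _ = (∑ i, x i * Real.log (x i / (y i * (X / Y)))) + (∑ i, x i) * Real.log (X / Y) := by
            rw [Finset.sum_add_distrib, Finset.sum_mul]
        _ = _ := by rw [← hXdef]
    have hnat : X * Real.log (X / Y) ≤ ∑ i, x i * Real.log (x i / y i) := by
      rw [hsum]; linarith
    -- convert to logb 2
    have hconv : ∀ z w : ℝ, z * Real.logb 2 w = z * Real.log w / Real.log 2 := by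
      intro z w; rw [Real.logb]; ring
    calc X * Real.logb 2 (X / Y) = X * Real.log (X / Y) / Real.log 2 := hconv _ _
      _ ≤ (∑ i, x i * Real.log (x i / y i)) / Real.log 2 := by
          exact (div_le_div_iff_of_pos_right hlog2).mpr hnat
      _ = ∑ i, x i * Real.logb 2 (x i / y i) := by
          rw [Finset.sum_div]; exact Finset.sum_congr rfl fun i _ => (hconv _ _).symm

lemma split3 (x u v : ℝ) (hx : 0 ≤ x) (hu : x ≤ u) (hv : x ≤ v) :
    x * Real.logb 2 (x / (u * v)) =
      x * Real.logb 2 x - x * Real.logb 2 u - x * Real.logb 2 v := by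
  rcases eq_or_lt_of_le hx with h | h
  · rw [← h]; ring
  · have hu0 : u ≠ 0 := (lt_of_lt_of_le h hu).ne'
    have hv0 : v ≠ 0 := (lt_of_lt_of_le h hv).ne'
    rw [Real.logb_div h.ne' (mul_ne_zero hu0 hv0), Real.logb_mul hu0 hv0]; ring

lemma split4 (x u v w : ℝ) (hx : 0 ≤ x) (hu : x ≤ u) (hv : x ≤ v) (hw : 0 < w) :
    x * Real.logb 2 (x / (u * v / w)) =
      x * Real.logb 2 x - x * Real.logb 2 u - x * Real.logb 2 v + x * Real.logb 2 w := by
  rcases eq_or_lt_of_le hx with h | h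
  · rw [← h]; ring
  · have hu0 : u ≠ 0 := (lt_of_lt_of_le h hu).ne'
    have hv0 : v ≠ 0 := (lt_of_lt_of_le h hv).ne'
    have heq : x / (u * v / w) = x * w / (u * v) := by
      rw [div_div_eq_mul_div]
    rw [heq, Real.logb_div (by positivity) (mul_ne_zero hu0 hv0),
      Real.logb_mul h.ne' hw.ne', Real.logb_mul hu0 hv0]
    ring

lemma split2 (x u : ℝ) (hx : 0 ≤ x) (hu : x ≤ u) :
    x * Real.logb 2 (x / u) = x * Real.logb 2 x - x * Real.logb 2 u := by
  rcases eq_or_lt_of_le hx with h | h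
  · rw [← h]; ring
  · have hu0 : u ≠ 0 := (lt_of_lt_of_le h hu).ne'
    rw [Real.logb_div h.ne' hu0]; ring

lemma mul_logb_mono (x u : ℝ) (hx : 0 ≤ x) (hu : x ≤ u) :
    x * Real.logb 2 x ≤ x * Real.logb 2 u := by
  rcases eq_or_lt_of_le hx with h | h
  · rw [← h]; simp
  · exact mul_le_mul_of_nonneg_left (Real.logb_le_logb_of_le one_lt_two h hu) hx

lemma binEnt_bound (y : ℝ) (hy : 0 ≤ y) (hy1 : y ≤ 1) :
    -2 * (1 - y) ≤ y * Real.logb 2 y := by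
  rcases eq_or_lt_of_le hy with h | h
  · rw [← h]; norm_num
  · have hlog2 : (0.6931471803 : ℝ) < Real.log 2 := Real.log_two_gt_d9
    have hlog2' : (0:ℝ) < Real.log 2 := by linarith
    have h1 : y - 1 ≤ y * Real.log y := by
      have hl : Real.log (1 / y) ≤ 1 / y - 1 := Real.log_le_sub_one_of_pos (by positivity)
      have hinv : Real.log (1 / y) = - Real.log y := by
        rw [one_div, Real.log_inv]
      have h2 : y * (1 / y) = 1 := by field_simp
      nlinarith [mul_le_mul_of_nonneg_left hl h.le]
    have h3 : y * Real.log y ≤ 0 := Real.mul_log_nonpos hy hy1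
    have hrw : y * Real.logb 2 y = y * Real.log y / Real.log 2 := by
      rw [Real.logb]; ring
    rw [hrw, le_div_iff₀ hlog2']
    nlinarith

lemma sum_sum_mul_right {S T : Type*} [Fintype S] [Fintype T] (f : S → T → ℝ) (g : S → ℝ) :
    ∑ s, ∑ t, f s t * g s = ∑ s, (∑ t, f s t) * g s :=
  Finset.sum_congr rfl fun s _ => (Finset.sum_mul _ _ _).symm

lemma sum_sum_mul_left {S T : Type*} [Fintype S] [Fintype T] (f : S → T → ℝ) (g : T → ℝ) :
    ∑ s, ∑ t, f s t * g t = ∑ t, (∑ s, f s t) * g t := by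
  rw [Finset.sum_comm]
  exact Finset.sum_congr rfl fun t _ => (Finset.sum_mul _ _ _).symm

lemma sum_sum_mul_const {S T : Type*} [Fintype S] [Fintype T] (f : S → T → ℝ) (c : ℝ) :
    ∑ s, ∑ t, f s t * c = (∑ s, ∑ t, f s t) * c := by
  rw [Finset.sum_mul]
  exact Finset.sum_congr rfl fun s _ => (Finset.sum_mul _ _ _).symm

lemma keyIneq {S T : Type*} [Fintype S] [Fintype T]
    (aE aF : S → T → ℝ) (hEnn : ∀ s t, 0 ≤ aE s t) (hFnn : ∀ s t, 0 ≤ aF s t)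
    (htot : ∑ s, ∑ t, (aE s t + aF s t) = 1) :
    (∑ s, ∑ t, aE s t * Real.logb 2 (aE s t / ((∑ t', aE s t') * (∑ s', aE s' t))))
      + 2 * (∑ s, ∑ t, aE s t) * Real.logb 2 (∑ s, ∑ t, aE s t)
      - 2 * (∑ s, ∑ t, aE s t)
    ≤ ∑ s, ∑ t, (aE s t + aF s t) *
        Real.logb 2 ((aE s t + aF s t) /
          ((∑ t', (aE s t' + aF s t')) * (∑ s', (aE s' t + aF s' t)))) := by
  have hann : ∀ s t, 0 ≤ aE s t + aF s t := fun s t => add_nonneg (hEnn s t) (hFnn s t)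
  -- nonnegativity of marginals
  have hbEnn : ∀ s, 0 ≤ ∑ t, aE s t := fun s => Finset.sum_nonneg fun t _ => hEnn s t
  have hbFnn : ∀ s, 0 ≤ ∑ t, aF s t := fun s => Finset.sum_nonneg fun t _ => hFnn s t
  have hcEnn : ∀ t, 0 ≤ ∑ s, aE s t := fun t => Finset.sum_nonneg fun s _ => hEnn s t
  have hcFnn : ∀ t, 0 ≤ ∑ s, aF s t := fun t => Finset.sum_nonneg fun s _ => hFnn s t
  have hpEnn : 0 ≤ ∑ s, ∑ t, aE s t := Finset.sum_nonneg fun s _ => hbEnn s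
  have hpFnn : 0 ≤ ∑ s, ∑ t, aF s t := Finset.sum_nonneg fun s _ => hbFnn s
  have hpEpF : (∑ s, ∑ t, aE s t) + (∑ s, ∑ t, aF s t) = 1 := by
    rw [← Finset.sum_add_distrib, ← htot]
    exact Finset.sum_congr rfl fun s _ => (Finset.sum_add_distrib).symm
  -- domination facts
  have hdomE1 : ∀ s t, aE s t ≤ ∑ t', aE s t' :=
    fun s t => Finset.single_le_sum (f := fun t' => aE s t') (fun i _ => hEnn s i) (Finset.mem_univ t)
  have hdomE2 : ∀ s t, aE s t ≤ ∑ s', aE s' t :=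
    fun s t => Finset.single_le_sum (f := fun s' => aE s' t) (fun i _ => hEnn i t) (Finset.mem_univ s)
  have hdomF1 : ∀ s t, aF s t ≤ ∑ t', aF s t' :=
    fun s t => Finset.single_le_sum (f := fun t' => aF s t') (fun i _ => hFnn s i) (Finset.mem_univ t)
  have hdomF2 : ∀ s t, aF s t ≤ ∑ s', aF s' t :=
    fun s t => Finset.single_le_sum (f := fun s' => aF s' t) (fun i _ => hFnn i t) (Finset.mem_univ s)
  have hdomA1 : ∀ s t, aE s t + aF s t ≤ ∑ t', (aE s t' + aF s t') :=
    fun s t => Finset.single_le_sum (f := fun t' => aE s t' + aF s t') (fun i _ => hann s i) (Finset.mem_univ t)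
  have hdomA2 : ∀ s t, aE s t + aF s t ≤ ∑ s', (aE s' t + aF s' t) :=
    fun s t => Finset.single_le_sum (f := fun s' => aE s' t + aF s' t) (fun i _ => hann i t) (Finset.mem_univ s)
  have hbE_le : ∀ s, (∑ t, aE s t) ≤ ∑ s', ∑ t, aE s' t :=
    fun s => Finset.single_le_sum (f := fun s' => ∑ t, aE s' t) (fun i _ => hbEnn i) (Finset.mem_univ s)
  have hbF_le : ∀ s, (∑ t, aF s t) ≤ ∑ s', ∑ t, aF s' t :=
    fun s => Finset.single_le_sum (f := fun s' => ∑ t, aF s' t) (fun i _ => hbFnn i) (Finset.mem_univ s)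
  have hbEa : ∀ s, (∑ t, aE s t) ≤ ∑ t, (aE s t + aF s t) :=
    fun s => Finset.sum_le_sum fun t _ => le_add_of_nonneg_right (hFnn s t)
  have hbFa : ∀ s, (∑ t, aF s t) ≤ ∑ t, (aE s t + aF s t) :=
    fun s => Finset.sum_le_sum fun t _ => le_add_of_nonneg_left (hEnn s t)
  have hcEa : ∀ t, (∑ s, aE s t) ≤ ∑ s, (aE s t + aF s t) :=
    fun t => Finset.sum_le_sum fun s _ => le_add_of_nonneg_right (hFnn s t)
  have hcFa : ∀ t, (∑ s, aF s t) ≤ ∑ s, (aE s t + aF s t) :=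
    fun t => Finset.sum_le_sum fun s _ => le_add_of_nonneg_left (hEnn s t)
  -- rewrite the right-hand side into atoms
  have hR : ∑ s, ∑ t, (aE s t + aF s t) *
        Real.logb 2 ((aE s t + aF s t) /
          ((∑ t', (aE s t' + aF s t')) * (∑ s', (aE s' t + aF s' t))))
      = (∑ s, ∑ t, (aE s t + aF s t) * Real.logb 2 (aE s t + aF s t))
        - (∑ s, (∑ t, (aE s t + aF s t)) * Real.logb 2 (∑ t, (aE s t + aF s t)))
        - (∑ t, (∑ s, (aE s t + aF s t)) * Real.logb 2 (∑ s, (aE s t + aF s t))) := by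
    have h1 : ∀ s t, (aE s t + aF s t) *
        Real.logb 2 ((aE s t + aF s t) /
          ((∑ t', (aE s t' + aF s t')) * (∑ s', (aE s' t + aF s' t))))
        = (aE s t + aF s t) * Real.logb 2 (aE s t + aF s t)
          - (aE s t + aF s t) * Real.logb 2 (∑ t', (aE s t' + aF s t'))
          - (aE s t + aF s t) * Real.logb 2 (∑ s', (aE s' t + aF s' t)) :=
      fun s t => split3 _ _ _ (hann s t) (hdomA1 s t) (hdomA2 s t)
    simp only [h1]
    simp only [Finset.sum_sub_distrib]
    rw [sum_sum_mul_right (fun s t => aE s t + aF s t)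
        (fun s => Real.logb 2 (∑ t', (aE s t' + aF s t'))),
      sum_sum_mul_left (fun s t => aE s t + aF s t)
        (fun t => Real.logb 2 (∑ s', (aE s' t + aF s' t)))]
  -- rewrite the left-hand big sum into atoms
  have hLe : ∑ s, ∑ t, aE s t * Real.logb 2 (aE s t / ((∑ t', aE s t') * (∑ s', aE s' t)))
      = (∑ s, ∑ t, aE s t * Real.logb 2 (aE s t))
        - (∑ s, (∑ t, aE s t) * Real.logb 2 (∑ t, aE s t))
        - (∑ t, (∑ s, aE s t) * Real.logb 2 (∑ s, aE s t)) := by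
    have h1 : ∀ s t, aE s t * Real.logb 2 (aE s t / ((∑ t', aE s t') * (∑ s', aE s' t)))
        = aE s t * Real.logb 2 (aE s t)
          - aE s t * Real.logb 2 (∑ t', aE s t')
          - aE s t * Real.logb 2 (∑ s', aE s' t) :=
      fun s t => split3 _ _ _ (hEnn s t) (hdomE1 s t) (hdomE2 s t)
    simp only [h1]
    simp only [Finset.sum_sub_distrib]
    rw [sum_sum_mul_right aE (fun s => Real.logb 2 (∑ t', aE s t')),
      sum_sum_mul_left aE (fun t => Real.logb 2 (∑ s', aE s' t))]
  rw [hR, hLe]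
  -- h3 : AE + AF ≤ A
  have h3 : (∑ s, ∑ t, aE s t * Real.logb 2 (aE s t))
      + (∑ s, ∑ t, aF s t * Real.logb 2 (aF s t))
      ≤ ∑ s, ∑ t, (aE s t + aF s t) * Real.logb 2 (aE s t + aF s t) := by
    rw [← Finset.sum_add_distrib]
    refine Finset.sum_le_sum fun s _ => ?_
    rw [← Finset.sum_add_distrib]
    refine Finset.sum_le_sum fun t _ => ?_
    have e1 := mul_logb_mono (aE s t) (aE s t + aF s t) (hEnn s t) (le_add_of_nonneg_right (hFnn s t))
    have e2 := mul_logb_mono (aF s t) (aE s t + aF s t) (hFnn s t) (le_add_of_nonneg_left (hEnn s t))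
    rw [add_mul]
    exact add_le_add e1 e2
  -- h4E and h4F : conditioning reduces entropy (Z-marginal)
  have h4E : (∑ s, ∑ t, aE s t) * Real.logb 2 (∑ s, ∑ t, aE s t)
      ≤ (∑ t, (∑ s, aE s t) * Real.logb 2 (∑ s, aE s t))
        - (∑ t, (∑ s, aE s t) * Real.logb 2 (∑ s, (aE s t + aF s t))) := by
    have hg := gibbs (fun t => ∑ s, aE s t) (fun t => ∑ s, (aE s t + aF s t))
      hcEnn (fun t => Finset.sum_nonneg fun s _ => hann s t)
      (fun t h => by
        have h1 : 0 < ∑ s, aE s t := (hcEnn t).lt_of_ne (Ne.symm h)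
        exact (lt_of_lt_of_le h1 (hcEa t)).ne')
    rw [show (∑ t, ∑ s, aE s t) = ∑ s, ∑ t, aE s t from Finset.sum_comm,
      show (∑ t, ∑ s, (aE s t + aF s t)) = 1 from Finset.sum_comm.trans htot,
      div_one] at hg
    have hsp : ∀ t, (∑ s, aE s t) * Real.logb 2 ((∑ s, aE s t) / (∑ s, (aE s t + aF s t)))
        = (∑ s, aE s t) * Real.logb 2 (∑ s, aE s t)
          - (∑ s, aE s t) * Real.logb 2 (∑ s, (aE s t + aF s t)) :=
      fun t => split2 _ _ (hcEnn t) (hcEa t)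
    simp only [hsp, Finset.sum_sub_distrib] at hg
    exact hg
  have h4F : (∑ s, ∑ t, aF s t) * Real.logb 2 (∑ s, ∑ t, aF s t)
      ≤ (∑ t, (∑ s, aF s t) * Real.logb 2 (∑ s, aF s t))
        - (∑ t, (∑ s, aF s t) * Real.logb 2 (∑ s, (aE s t + aF s t))) := by
    have hg := gibbs (fun t => ∑ s, aF s t) (fun t => ∑ s, (aE s t + aF s t))
      hcFnn (fun t => Finset.sum_nonneg fun s _ => hann s t)
      (fun t h => by
        have h1 : 0 < ∑ s, aF s t := (hcFnn t).lt_of_ne (Ne.symm h)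
        exact (lt_of_lt_of_le h1 (hcFa t)).ne')
    rw [show (∑ t, ∑ s, aF s t) = ∑ s, ∑ t, aF s t from Finset.sum_comm,
      show (∑ t, ∑ s, (aE s t + aF s t)) = 1 from Finset.sum_comm.trans htot,
      div_one] at hg
    have hsp : ∀ t, (∑ s, aF s t) * Real.logb 2 ((∑ s, aF s t) / (∑ s, (aE s t + aF s t)))
        = (∑ s, aF s t) * Real.logb 2 (∑ s, aF s t)
          - (∑ s, aF s t) * Real.logb 2 (∑ s, (aE s t + aF s t)) :=
      fun t => split2 _ _ (hcFnn t) (hcFa t)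
    simp only [hsp, Finset.sum_sub_distrib] at hg
    exact hg
  have hD : (∑ t, (∑ s, aE s t) * Real.logb 2 (∑ s, (aE s t + aF s t)))
      + (∑ t, (∑ s, aF s t) * Real.logb 2 (∑ s, (aE s t + aF s t)))
      = ∑ t, (∑ s, (aE s t + aF s t)) * Real.logb 2 (∑ s, (aE s t + aF s t)) := by
    rw [← Finset.sum_add_distrib]
    exact Finset.sum_congr rfl fun t _ => by rw [← add_mul, ← Finset.sum_add_distrib]
  -- h2E, h2F : I(U;W) ≥ 0  pieces
  have hpEq : ∀ hpE : (∑ s, ∑ t, aE s t) = (∑ s, ∑ t, aE s t), True := fun _ => trivial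
  have hppE : (∑ s, ∑ t, aE s t) * Real.logb 2 ((∑ s, ∑ t, aE s t) / (∑ s, ∑ t, aE s t)) = 0 := by
    rcases eq_or_lt_of_le hpEnn with h | h
    · rw [← h, zero_mul]
    · rw [div_self h.ne', Real.logb_one, mul_zero]
  have hppF : (∑ s, ∑ t, aF s t) * Real.logb 2 ((∑ s, ∑ t, aF s t) / (∑ s, ∑ t, aF s t)) = 0 := by
    rcases eq_or_lt_of_le hpFnn with h | h
    · rw [← h, zero_mul]
    · rw [div_self h.ne', Real.logb_one, mul_zero]
  have h2E : 0 ≤ (∑ s, (∑ t, aE s t) * Real.logb 2 (∑ t, aE s t))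
      - (∑ s, (∑ t, aE s t) * Real.logb 2 (∑ t, (aE s t + aF s t)))
      - (∑ s, ∑ t, aE s t) * Real.logb 2 (∑ s, ∑ t, aE s t) := by
    have hg := gibbs (fun s => ∑ t, aE s t)
      (fun s => (∑ t, (aE s t + aF s t)) * (∑ s', ∑ t, aE s' t))
      hbEnn
      (fun s => mul_nonneg (Finset.sum_nonneg fun t _ => hann s t) hpEnn)
      (fun s h => by
        have h1 : 0 < ∑ t, aE s t := (hbEnn s).lt_of_ne (Ne.symm h)
        exact mul_ne_zero (lt_of_lt_of_le h1 (hbEa s)).ne' (lt_of_lt_of_le h1 (hbE_le s)).ne')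
    rw [show (∑ s, (∑ t, (aE s t + aF s t)) * (∑ s', ∑ t, aE s' t))
          = ∑ s', ∑ t, aE s' t by rw [← Finset.sum_mul, htot, one_mul]] at hg
    rw [hppE] at hg
    have hsp : ∀ s, (∑ t, aE s t) * Real.logb 2
          ((∑ t, aE s t) / ((∑ t, (aE s t + aF s t)) * (∑ s', ∑ t, aE s' t)))
        = (∑ t, aE s t) * Real.logb 2 (∑ t, aE s t)
          - (∑ t, aE s t) * Real.logb 2 (∑ t, (aE s t + aF s t))
          - (∑ t, aE s t) * Real.logb 2 (∑ s', ∑ t, aE s' t) :=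
      fun s => split3 _ _ _ (hbEnn s) (hbEa s) (hbE_le s)
    simp only [hsp, Finset.sum_sub_distrib] at hg
    rw [← Finset.sum_mul] at hg
    exact hg
  have h2F : 0 ≤ (∑ s, (∑ t, aF s t) * Real.logb 2 (∑ t, aF s t))
      - (∑ s, (∑ t, aF s t) * Real.logb 2 (∑ t, (aE s t + aF s t)))
      - (∑ s, ∑ t, aF s t) * Real.logb 2 (∑ s, ∑ t, aF s t) := by
    have hg := gibbs (fun s => ∑ t, aF s t)
      (fun s => (∑ t, (aE s t + aF s t)) * (∑ s', ∑ t, aF s' t))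
      hbFnn
      (fun s => mul_nonneg (Finset.sum_nonneg fun t _ => hann s t) hpFnn)
      (fun s h => by
        have h1 : 0 < ∑ t, aF s t := (hbFnn s).lt_of_ne (Ne.symm h)
        exact mul_ne_zero (lt_of_lt_of_le h1 (hbFa s)).ne' (lt_of_lt_of_le h1 (hbF_le s)).ne')
    rw [show (∑ s, (∑ t, (aE s t + aF s t)) * (∑ s', ∑ t, aF s' t))
          = ∑ s', ∑ t, aF s' t by rw [← Finset.sum_mul, htot, one_mul]] at hg
    rw [hppF] at hg
    have hsp : ∀ s, (∑ t, aF s t) * Real.logb 2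
          ((∑ t, aF s t) / ((∑ t, (aE s t + aF s t)) * (∑ s', ∑ t, aF s' t)))
        = (∑ t, aF s t) * Real.logb 2 (∑ t, aF s t)
          - (∑ t, aF s t) * Real.logb 2 (∑ t, (aE s t + aF s t))
          - (∑ t, aF s t) * Real.logb 2 (∑ s', ∑ t, aF s' t) :=
      fun s => split3 _ _ _ (hbFnn s) (hbFa s) (hbF_le s)
    simp only [hsp, Finset.sum_sub_distrib] at hg
    rw [← Finset.sum_mul] at hg
    exact hg
  have hG : (∑ s, (∑ t, aE s t) * Real.logb 2 (∑ t, (aE s t + aF s t)))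
      + (∑ s, (∑ t, aF s t) * Real.logb 2 (∑ t, (aE s t + aF s t)))
      = ∑ s, (∑ t, (aE s t + aF s t)) * Real.logb 2 (∑ t, (aE s t + aF s t)) := by
    rw [← Finset.sum_add_distrib]
    exact Finset.sum_congr rfl fun s _ => by rw [← add_mul, ← Finset.sum_add_distrib]
  -- h1 : the E-complement part of I(U;Z|W) is nonnegative
  have h1 : 0 ≤ (∑ s, ∑ t, aF s t * Real.logb 2 (aF s t))
      - (∑ s, (∑ t, aF s t) * Real.logb 2 (∑ t, aF s t))
      - (∑ t, (∑ s, aF s t) * Real.logb 2 (∑ s, aF s t))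
      + (∑ s, ∑ t, aF s t) * Real.logb 2 (∑ s, ∑ t, aF s t) := by
    by_cases hpF0 : (∑ s, ∑ t, aF s t) = 0
    · have haF0 : ∀ s t, aF s t = 0 := by
        intro s t
        have hs : ∀ s' ∈ Finset.univ, (∑ t, aF s' t) = 0 :=
          (Finset.sum_eq_zero_iff_of_nonneg (fun s' _ => hbFnn s')).1 hpF0
        exact (Finset.sum_eq_zero_iff_of_nonneg (fun t' _ => hFnn s t')).1
          (hs s (Finset.mem_univ s)) t (Finset.mem_univ t)
      simp only [haF0, zero_mul, Finset.sum_const_zero, mul_zero, add_zero, sub_zero]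
      norm_num
    · have hpF : 0 < ∑ s, ∑ t, aF s t := hpFnn.lt_of_ne (Ne.symm hpF0)
      have hg := gibbs (ι := S × T) (fun q => aF q.1 q.2)
        (fun q => (∑ t', aF q.1 t') * (∑ s', aF s' q.2) / (∑ s, ∑ t, aF s t))
        (fun q => hFnn q.1 q.2)
        (fun q => div_nonneg (mul_nonneg (hbFnn q.1) (hcFnn q.2)) hpFnn)
        (fun q h => by
          have h1 : 0 < aF q.1 q.2 := (hFnn q.1 q.2).lt_of_ne (Ne.symm h)
          have hb : 0 < ∑ t', aF q.1 t' := lt_of_lt_of_le h1 (hdomF1 q.1 q.2)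
          have hc : 0 < ∑ s', aF s' q.2 := lt_of_lt_of_le h1 (hdomF2 q.1 q.2)
          positivity)
      simp only [Fintype.sum_prod_type] at hg
      have hY : (∑ s, ∑ t, (∑ t', aF s t') * (∑ s', aF s' t) / (∑ s, ∑ t, aF s t))
          = ∑ s, ∑ t, aF s t := by
        refine Finset.sum_congr rfl fun s _ => ?_
        rw [← Finset.sum_div, ← Finset.mul_sum,
          show (∑ t, ∑ s', aF s' t) = ∑ s', ∑ t, aF s' t from Finset.sum_comm,
          mul_div_assoc, div_self hpF0, mul_one]
      rw [hY, hppF] at hg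
      have hsp : ∀ s t, aF s t * Real.logb 2
            (aF s t / ((∑ t', aF s t') * (∑ s', aF s' t) / (∑ s, ∑ t, aF s t)))
          = aF s t * Real.logb 2 (aF s t)
            - aF s t * Real.logb 2 (∑ t', aF s t')
            - aF s t * Real.logb 2 (∑ s', aF s' t)
            + aF s t * Real.logb 2 (∑ s, ∑ t, aF s t) :=
        fun s t => split4 _ _ _ _ (hFnn s t) (hdomF1 s t) (hdomF2 s t) hpF
      simp only [hsp, Finset.sum_sub_distrib, Finset.sum_add_distrib] at hg
      rw [sum_sum_mul_right aF (fun s => Real.logb 2 (∑ t', aF s t')),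
        sum_sum_mul_left aF (fun t => Real.logb 2 (∑ s', aF s' t)),
        sum_sum_mul_const aF (Real.logb 2 (∑ s, ∑ t, aF s t))] at hg
      exact hg
  have h5 : -2 * (1 - (∑ s, ∑ t, aF s t))
      ≤ (∑ s, ∑ t, aF s t) * Real.logb 2 (∑ s, ∑ t, aF s t) :=
    binEnt_bound _ hpFnn (by linarith)
  linarith

lemma prEv_nonneg {Ω : Type*} [Fintype Ω] {p : Ω → ℝ} (hp : ∀ ω, 0 ≤ p ω) (P : Ω → Prop) :
    0 ≤ prEv p P :=
  Finset.sum_nonneg fun ω _ => by by_cases h : P ω <;> simp [h, hp ω]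

lemma prEv_mono {Ω : Type*} [Fintype Ω] {p : Ω → ℝ} (hp : ∀ ω, 0 ≤ p ω) {P Q : Ω → Prop}
    (h : ∀ ω, P ω → Q ω) : prEv p P ≤ prEv p Q := by
  refine Finset.sum_le_sum fun ω _ => ?_
  by_cases hP : P ω
  · simp [hP, h ω hP]
  · by_cases hQ : Q ω <;> simp [hP, hQ, hp ω]

lemma prEv_congr {Ω : Type*} [Fintype Ω] (p : Ω → ℝ) {P Q : Ω → Prop}
    (h : ∀ ω, P ω ↔ Q ω) : prEv p P = prEv p Q :=
  Finset.sum_congr rfl fun ω _ => by rw [if_congr (h ω) rfl rfl]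

lemma prEv_sum_snd {Ω S : Type*} [Fintype Ω] [Fintype S] (p : Ω → ℝ) (P : Ω → Prop)
    (X : Ω → S) : ∑ s, prEv p (fun ω => P ω ∧ X ω = s) = prEv p P := by
  unfold prEv
  rw [Finset.sum_comm]
  refine Finset.sum_congr rfl fun ω _ => ?_
  by_cases hP : P ω
  · simp [hP]
  · simp [hP]

lemma prEv_true {Ω : Type*} [Fintype Ω] (p : Ω → ℝ) :
    prEv p (fun _ => True) = ∑ ω, p ω := by simp [prEv]

lemma prEv_split {Ω : Type*} [Fintype Ω] (p : Ω → ℝ) (P E : Ω → Prop) :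
    prEv p (fun ω => P ω ∧ E ω) + prEv p (fun ω => P ω ∧ ¬ E ω) = prEv p P := by
  unfold prEv
  rw [← Finset.sum_add_distrib]
  refine Finset.sum_congr rfl fun ω _ => ?_
  by_cases hP : P ω <;> by_cases hE : E ω <;> simp [hP, hE]

lemma split_bc (x u v : ℝ) (hx : 0 ≤ x) (hu : x ≤ u) (hv : x ≤ v) :
    x * Real.logb 2 (x / (u * v)) = x * Real.logb 2 (x / v) - x * Real.logb 2 u := by
  rcases eq_or_lt_of_le hx with h | h
  · rw [← h]; ring
  · have hu0 : u ≠ 0 := (lt_of_lt_of_le h hu).ne'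
    have hv0 : v ≠ 0 := (lt_of_lt_of_le h hv).ne'
    rw [Real.logb_div h.ne' (mul_ne_zero hu0 hv0), Real.logb_div h.ne' hv0,
      Real.logb_mul hu0 hv0]
    ring


lemma mi_eq {Ω S T : Type*} [Fintype Ω] [Fintype S] [Fintype T]
    (p : Ω → ℝ) (hp : ∀ ω, 0 ≤ p ω) (U : Ω → S) (Z : Ω → T) :
    mi p U Z = ∑ s, ∑ t, prEv p (fun ω => U ω = s ∧ Z ω = t) *
      Real.logb 2 (prEv p (fun ω => U ω = s ∧ Z ω = t) /
        (prEv p (fun ω => U ω = s) * prEv p (fun ω => Z ω = t))) := by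
  have hsp : ∀ s t, prEv p (fun ω => U ω = s ∧ Z ω = t) *
      Real.logb 2 (prEv p (fun ω => U ω = s ∧ Z ω = t) /
        (prEv p (fun ω => U ω = s) * prEv p (fun ω => Z ω = t)))
      = prEv p (fun ω => U ω = s ∧ Z ω = t) *
          Real.logb 2 (prEv p (fun ω => U ω = s ∧ Z ω = t) / prEv p (fun ω => Z ω = t))
        - prEv p (fun ω => U ω = s ∧ Z ω = t) * Real.logb 2 (prEv p (fun ω => U ω = s)) :=
    fun s t => split_bc _ _ _ (prEv_nonneg hp _)
      (prEv_mono hp fun ω h => h.1) (prEv_mono hp fun ω h => h.2)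
  simp only [hsp, Finset.sum_sub_distrib]
  have hm : ∀ s, ∑ t, prEv p (fun ω => U ω = s ∧ Z ω = t) *
        Real.logb 2 (prEv p (fun ω => U ω = s))
      = prEv p (fun ω => U ω = s) * Real.logb 2 (prEv p (fun ω => U ω = s)) := by
    intro s
    rw [← Finset.sum_mul, prEv_sum_snd p (fun ω => U ω = s) Z]
  simp only [hm]
  unfold mi ent condEnt
  ring

/-- For an event `E` with `Pr[E] = p > 0`,
`I(U;Z) ≥ p·I_{|E}(U;Z) − p·log₂(4/p)`, where `I_{|E}` is the mutual
information computed under the conditional measure given `E`. -/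
theorem mutualInfo_ge_conditional
    {Ω S T : Type*} [Fintype Ω] [Fintype S] [Fintype T]
    (p : Ω → ℝ) (hp : ∀ ω, 0 ≤ p ω) (hsum : ∑ ω, p ω = 1)
    (U : Ω → S) (Z : Ω → T) (E : Ω → Prop) (pE : ℝ)
    (hE : prEv p E = pE) (hpos : 0 < pE) :
    mi p U Z ≥
      pE * mi (fun ω => if E ω then p ω / pE else 0) U Z - pE * Real.logb 2 (4 / pE) := by
  have hpE0 : pE ≠ 0 := hpos.ne'
  have hq : ∀ ω, 0 ≤ (if E ω then p ω / pE else 0) := fun ω => by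
    by_cases h : E ω
    · simp only [h, if_true]; exact div_nonneg (hp ω) hpos.le
    · simp [h]
  have hqPr : ∀ P : Ω → Prop, prEv (fun ω => if E ω then p ω / pE else 0) P
      = prEv p (fun ω => P ω ∧ E ω) / pE := by
    intro P
    unfold prEv
    rw [Finset.sum_div]
    refine Finset.sum_congr rfl fun ω _ => ?_
    by_cases hP : P ω <;> by_cases hEω : E ω <;> simp [hP, hEω]
  -- marginal identities
  have m1 : ∀ s, ∑ t, prEv p (fun ω => U ω = s ∧ Z ω = t) = prEv p (fun ω => U ω = s) :=
    fun s => prEv_sum_snd p (fun ω => U ω = s) Z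
  have m2 : ∀ t, ∑ s, prEv p (fun ω => U ω = s ∧ Z ω = t) = prEv p (fun ω => Z ω = t) := by
    intro t
    calc ∑ s, prEv p (fun ω => U ω = s ∧ Z ω = t)
        = ∑ s, prEv p (fun ω => Z ω = t ∧ U ω = s) :=
          Finset.sum_congr rfl fun s _ => prEv_congr p fun ω => and_comm
      _ = prEv p (fun ω => Z ω = t) := prEv_sum_snd p _ U
  have m3 : ∀ s, ∑ t, prEv p (fun ω => (U ω = s ∧ Z ω = t) ∧ E ω)
      = prEv p (fun ω => U ω = s ∧ E ω) := by
    intro s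
    calc ∑ t, prEv p (fun ω => (U ω = s ∧ Z ω = t) ∧ E ω)
        = ∑ t, prEv p (fun ω => (U ω = s ∧ E ω) ∧ Z ω = t) :=
          Finset.sum_congr rfl fun t _ => prEv_congr p fun ω => by tauto
      _ = prEv p (fun ω => U ω = s ∧ E ω) := prEv_sum_snd p _ Z
  have m4 : ∀ t, ∑ s, prEv p (fun ω => (U ω = s ∧ Z ω = t) ∧ E ω)
      = prEv p (fun ω => Z ω = t ∧ E ω) := by
    intro t
    calc ∑ s, prEv p (fun ω => (U ω = s ∧ Z ω = t) ∧ E ω)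
        = ∑ s, prEv p (fun ω => (Z ω = t ∧ E ω) ∧ U ω = s) :=
          Finset.sum_congr rfl fun s _ => prEv_congr p fun ω => by tauto
      _ = prEv p (fun ω => Z ω = t ∧ E ω) := prEv_sum_snd p _ U
  have m5 : ∑ s, prEv p (fun ω => U ω = s ∧ E ω) = prEv p E := by
    calc ∑ s, prEv p (fun ω => U ω = s ∧ E ω)
        = ∑ s, prEv p (fun ω => E ω ∧ U ω = s) :=
          Finset.sum_congr rfl fun s _ => prEv_congr p fun ω => and_comm
      _ = prEv p E := prEv_sum_snd p E U
  have m6 : ∑ s, prEv p (fun ω => U ω = s) = 1 := by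
    calc ∑ s, prEv p (fun ω => U ω = s)
        = ∑ s, prEv p (fun ω => (fun _ => True) ω ∧ U ω = s) :=
          Finset.sum_congr rfl fun s _ => prEv_congr p fun ω => by tauto
      _ = prEv p (fun _ => True) := prEv_sum_snd p (fun _ => True) U
      _ = 1 := (prEv_true p).trans hsum
  have hsplit : ∀ s t, prEv p (fun ω => (U ω = s ∧ Z ω = t) ∧ E ω)
      + prEv p (fun ω => (U ω = s ∧ Z ω = t) ∧ ¬ E ω)
      = prEv p (fun ω => U ω = s ∧ Z ω = t) :=
    fun s t => prEv_split p _ E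
  -- rewrite the two mutual informations
  have EQ1 := mi_eq p hp U Z
  have EQ2 := mi_eq (fun ω => if E ω then p ω / pE else 0) hq U Z
  simp only [hqPr] at EQ2
  have EQ3 : pE * Real.logb 2 (4 / pE) = 2 * pE - pE * Real.logb 2 pE := by
    have hlog2 : Real.log 2 ≠ 0 := (Real.log_pos one_lt_two).ne'
    have hlog4 : Real.logb 2 4 = 2 := by
      rw [show (4:ℝ) = 2 ^ (2:ℕ) by norm_num, Real.logb, Real.log_pow]
      field_simp
      norm_num
    rw [Real.logb_div (by norm_num) hpE0, hlog4]
    ring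
  have hterm : ∀ s t,
      pE * ((prEv p (fun ω => (U ω = s ∧ Z ω = t) ∧ E ω) / pE) *
        Real.logb 2 ((prEv p (fun ω => (U ω = s ∧ Z ω = t) ∧ E ω) / pE) /
          ((prEv p (fun ω => U ω = s ∧ E ω) / pE) *
            (prEv p (fun ω => Z ω = t ∧ E ω) / pE))))
      = prEv p (fun ω => (U ω = s ∧ Z ω = t) ∧ E ω) *
          Real.logb 2 (prEv p (fun ω => (U ω = s ∧ Z ω = t) ∧ E ω) /
            (prEv p (fun ω => U ω = s ∧ E ω) * prEv p (fun ω => Z ω = t ∧ E ω)))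
        + prEv p (fun ω => (U ω = s ∧ Z ω = t) ∧ E ω) * Real.logb 2 pE := by
    intro s t
    rcases eq_or_lt_of_le (prEv_nonneg hp (fun ω => (U ω = s ∧ Z ω = t) ∧ E ω)) with h | h
    · rw [← h]
      simp
    · have hu : 0 < prEv p (fun ω => U ω = s ∧ E ω) :=
        lt_of_lt_of_le h (prEv_mono hp fun ω hh => ⟨hh.1.1, hh.2⟩)
      have hv : 0 < prEv p (fun ω => Z ω = t ∧ E ω) :=
        lt_of_lt_of_le h (prEv_mono hp fun ω hh => ⟨hh.1.2, hh.2⟩)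
      have harg : (prEv p (fun ω => (U ω = s ∧ Z ω = t) ∧ E ω) / pE) /
          ((prEv p (fun ω => U ω = s ∧ E ω) / pE) *
            (prEv p (fun ω => Z ω = t ∧ E ω) / pE))
          = (prEv p (fun ω => (U ω = s ∧ Z ω = t) ∧ E ω) /
              (prEv p (fun ω => U ω = s ∧ E ω) * prEv p (fun ω => Z ω = t ∧ E ω))) * pE := by
        field_simp
      have hx : pE * (prEv p (fun ω => (U ω = s ∧ Z ω = t) ∧ E ω) / pE)
          = prEv p (fun ω => (U ω = s ∧ Z ω = t) ∧ E ω) := by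
        rw [mul_comm, div_mul_cancel₀ _ hpE0]
      rw [harg, Real.logb_mul (div_pos h (mul_pos hu hv)).ne' hpE0, ← mul_assoc, hx, mul_add]
  have EQ2' : pE * mi (fun ω => if E ω then p ω / pE else 0) U Z
      = (∑ s, ∑ t, prEv p (fun ω => (U ω = s ∧ Z ω = t) ∧ E ω) *
          Real.logb 2 (prEv p (fun ω => (U ω = s ∧ Z ω = t) ∧ E ω) /
            (prEv p (fun ω => U ω = s ∧ E ω) * prEv p (fun ω => Z ω = t ∧ E ω))))
        + pE * Real.logb 2 pE := by
    rw [EQ2]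
    simp only [Finset.mul_sum]
    simp only [hterm]
    simp only [Finset.sum_add_distrib]
    congr 1
    rw [sum_sum_mul_const (fun s t => prEv p (fun ω => (U ω = s ∧ Z ω = t) ∧ E ω))
        (Real.logb 2 pE)]
    congr 1
    simp only [m3]
    rw [m5, hE]
  -- apply the key inequality
  have hkey := keyIneq
    (fun s t => prEv p (fun ω => (U ω = s ∧ Z ω = t) ∧ E ω))
    (fun s t => prEv p (fun ω => (U ω = s ∧ Z ω = t) ∧ ¬ E ω))
    (fun s t => prEv_nonneg hp _) (fun s t => prEv_nonneg hp _)
    (by simp only [hsplit, m1]; exact m6)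
  simp only [hsplit, m1, m2, m3, m4, m5, hE] at hkey
  rw [ge_iff_le, EQ1, EQ2', EQ3]
  linarith [hkey]
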